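/- For all integers n and d with 2 ≤ d ≤ n/2: every Boolean function on {0,1}^n computed by a nondeterministic OBDD of width at most ⌊log₂ d⌋ is computed by a deterministic OBDD of width at most d, and there exists a Boolean function on {0,1}^n computed by a deterministic OBDD of width at most d but by no nondeterministic OBDD of width at most ⌊log₂ d⌋; i.e., the class NOBDD^{⌊log₂ d⌋} is strictly contained in the class OBDD^d. -/

import Mathlib

/-- Number of 1s in a binary string ν ∈ {0,1}^n. -/
def countOnes {n : ℕ} (ν : Fin n → Bool) : ℕ :=
  (Finset.univ.filter (fun i => ν i = true)).card

/-- Number of 0s in a binary string ν ∈ {0,1}^n. -/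
def countZeros {n : ℕ} (ν : Fin n → Bool) : ℕ :=
  (Finset.univ.filter (fun i => ν i = false)).card

/-- Number of 1s among the first `k` bits. -/
def countOnesFirst (k : ℕ) {n : ℕ} (ν : Fin n → Bool) : ℕ :=
  (Finset.univ.filter (fun i : Fin n => (i : ℕ) < k ∧ ν i = true)).card

/-- Number of 0s among the first `k` bits. -/
def countZerosFirst (k : ℕ) {n : ℕ} (ν : Fin n → Bool) : ℕ :=
  (Finset.univ.filter (fun i : Fin n => (i : ℕ) < k ∧ ν i = false)).card

/-- A deterministic OBDD of width `d` on `n` Boolean variables. -/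
structure DOBDD (n d : ℕ) where
  ord : Equiv.Perm (Fin n)
  T : Fin n → Bool → Fin d → Fin d
  start : Fin d
  Accept : Finset (Fin d)

/-- The node reached by a deterministic OBDD after reading all input bits. -/
def DOBDD.run {n d : ℕ} (M : DOBDD n d) (ν : Fin n → Bool) : Fin d :=
  (List.finRange n).foldl (fun v j => M.T j (ν (M.ord j)) v) M.start

def DOBDD.accepts {n d : ℕ} (M : DOBDD n d) (ν : Fin n → Bool) : Prop :=
  M.run ν ∈ M.Accept

/-- A deterministic OBDD computes a total Boolean function. -/
def DOBDD.computes {n d : ℕ} (M : DOBDD n d) (f : (Fin n → Bool) → Bool) : Prop :=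
  ∀ ν, M.accepts ν ↔ f ν = true

/-- A nondeterministic OBDD of width `d` on `n` Boolean variables. -/
structure NOBDD (n d : ℕ) where
  ord : Equiv.Perm (Fin n)
  T : Fin n → Bool → Fin d → Set (Fin d)
  start : Fin d
  Accept : Finset (Fin d)

/-- The set of nodes reachable by a nondeterministic OBDD after reading all input bits. -/
def NOBDD.reach {n d : ℕ} (M : NOBDD n d) (ν : Fin n → Bool) : Set (Fin d) :=
  (List.finRange n).foldl (fun S j => {w | ∃ v ∈ S, w ∈ M.T j (ν (M.ord j)) v}) {M.start}

def NOBDD.accepts {n d : ℕ} (M : NOBDD n d) (ν : Fin n → Bool) : Prop :=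
  ∃ v ∈ M.reach ν, v ∈ M.Accept

/-- A nondeterministic OBDD computes a total Boolean function. -/
def NOBDD.computes {n d : ℕ} (M : NOBDD n d) (f : (Fin n → Bool) → Bool) : Prop :=
  ∀ ν, M.accepts ν ↔ f ν = true

/-- The class of Boolean functions on n variables computed by deterministic
OBDDs of width at most `w`. -/
def OBDDclass (n w : ℕ) : Set ((Fin n → Bool) → Bool) :=
  {f | ∃ d, d ≤ w ∧ ∃ M : DOBDD n d, M.computes f}

/-- The class of Boolean functions on n variables computed by nondeterministic
OBDDs of width at most `w`. -/
def NOBDDclass (n w : ℕ) : Set ((Fin n → Bool) → Bool) :=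
  {f | ∃ d, d ≤ w ∧ ∃ M : NOBDD n d, M.computes f}

/-- Final probability distribution of a stable probabilistic OBDD given by the pair of
left-stochastic matrices `A`, variable order `ord`, and initial node `s`. -/
noncomputable def stableProbRun {n d : ℕ} (A : Bool → Matrix (Fin d) (Fin d) ℝ)
    (ord : Equiv.Perm (Fin n)) (s : Fin d) (ν : Fin n → Bool) : Fin d → ℝ :=
  (List.finRange n).foldl (fun v j => (A (ν (ord j))).mulVec v)
    (fun i => if i = s then 1 else 0)

/-- Final quantum state of a stable ID quantum OBDD given by the pair of matrices `U`
and the initial computational-basis state `q0`, reading bits in the natural order. -/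
noncomputable def quantumRunStable {n d : ℕ} (U : Bool → Matrix (Fin d) (Fin d) ℂ) (q0 : Fin d)
    (ν : Fin n → Bool) : Fin d → ℂ :=
  (List.finRange n).foldl (fun ψ j => (U (ν j)).mulVec ψ)
    (fun i => if i = q0 then 1 else 0)

/-- A quantum OBDD of width `d` on `n` Boolean variables. -/
structure QOBDD (n d : ℕ) where
  ord : Equiv.Perm (Fin n)
  U : Fin n → Bool → Matrix (Fin d) (Fin d) ℂ
  unitary : ∀ j b, U j b ∈ Matrix.unitaryGroup (Fin d) ℂ
  q0 : Fin d
  Accept : Finset (Fin d)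

/-- The final state of a quantum OBDD on input ν. -/
noncomputable def QOBDD.finalState {n d : ℕ} (M : QOBDD n d) (ν : Fin n → Bool) : Fin d → ℂ :=
  (List.finRange n).foldl (fun ψ j => (M.U j (ν (M.ord j))).mulVec ψ)
    (fun i => if i = M.q0 then 1 else 0)

/-- The acceptance probability of a quantum OBDD on input ν. -/
noncomputable def QOBDD.acceptProb {n d : ℕ} (M : QOBDD n d) (ν : Fin n → Bool) : ℝ :=
  ∑ i ∈ M.Accept, Complex.normSq (M.finalState ν i)

/-- `NotO_n(ν) = 0` iff `#0(ν) = #1(ν)`. -/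
def NotO (n : ℕ) (ν : Fin n → Bool) : Bool := !decide (countZeros ν = countOnes ν)

/-- `NotSQUARE_n(ν) = 0` iff `(#0(ν))² = #1(ν)`. -/
def NotSQUARE (n : ℕ) (ν : Fin n → Bool) : Bool := !decide ((countZeros ν) ^ 2 = countOnes ν)

/-- `NotPOWER_n(ν) = 0` iff `2^{#0(ν)} = #1(ν)`. -/
def NotPOWER (n : ℕ) (ν : Fin n → Bool) : Bool := !decide (2 ^ (countZeros ν) = countOnes ν)

/-- `MOD^k_n(ν) = 1` iff `#1(ν) ≡ 0 (mod k)`. -/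
def MODf (n k : ℕ) (ν : Fin n → Bool) : Bool := decide (countOnes ν % k = 0)

/-- `NotO^k_n(ν) = 0` iff `#^k_0(ν) = #^k_1(ν) = k/2`. -/
def NotOk (n k : ℕ) (ν : Fin n → Bool) : Bool :=
  !decide (countZerosFirst k ν = k / 2 ∧ countOnesFirst k ν = k / 2)

/-- The ordered subsequence of value bits `ν_{2i}` (1-indexed, `1 ≤ i ≤ k/2`) whose
marker bit `ν_{2i-1}` equals `b`; `b = false` gives `α(ν)` and `b = true` gives `β(ν)`. -/
def valueSubseq {n : ℕ} (k : ℕ) (b : Bool) (ν : Fin n → Bool) : List Bool :=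
  (List.range (k / 2)).filterMap (fun j =>
    if h : 2 * j + 1 < n then
      if ν ⟨2 * j, by omega⟩ = b then some (ν ⟨2 * j + 1, h⟩) else none
    else none)

/-- `EQS^k_n(ν) = 1` iff `α(ν) = β(ν)`. -/
def EQS (n k : ℕ) (ν : Fin n → Bool) : Bool :=
  decide (valueSubseq k false ν = valueSubseq k true ν)

/-- `NotEQS^k_n(ν) = 1 - EQS^k_n(ν)`. -/
def NotEQS (n k : ℕ) (ν : Fin n → Bool) : Bool := !(EQS n k ν)

section AuxNOBDD

private lemma aux_card_val_mem {n : ℕ} (s : Finset ℕ) (h : ∀ x ∈ s, x < n) :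
    (Finset.univ.filter (fun j : Fin n => (j : ℕ) ∈ s)).card = s.card := by
  classical
  refine Finset.card_bij (fun (j : Fin n) _ => (j : ℕ)) ?_ ?_ ?_
  · intro a ha; simpa using (Finset.mem_filter.mp ha).2
  · intro a _ b _ hab; exact Fin.val_injective hab
  · intro x hx; exact ⟨⟨x, h x hx⟩, by simp [hx], rfl⟩

private def nstep {n e : ℕ} (M : NOBDD n e) (μ : Fin n → Bool) (S : Set (Fin e))
    (j : Fin n) : Set (Fin e) :=
  {w | ∃ v ∈ S, w ∈ M.T j (μ j) v}

private lemma reach_eq_foldl {n e : ℕ} (M : NOBDD n e) (ν : Fin n → Bool) :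
    M.reach ν = (List.finRange n).foldl (nstep M (fun j => ν (M.ord j))) {M.start} := rfl

private lemma nstep_foldl_congr {n e : ℕ} (M : NOBDD n e) {μ μ' : Fin n → Bool}
    (l : List (Fin n)) (h : ∀ j ∈ l, μ j = μ' j) (S : Set (Fin e)) :
    l.foldl (nstep M μ) S = l.foldl (nstep M μ') S := by
  induction l generalizing S with
  | nil => rfl
  | cons j l ih =>
      simp only [List.foldl_cons]
      rw [show nstep M μ S j = nstep M μ' S j by
        unfold nstep; rw [h j (by simp)]]
      exact ih (fun j hj => h j (by simp [hj])) _

private lemma mem_nstep_foldl {n e : ℕ} (M : NOBDD n e) (μ : Fin n → Bool)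
    (l : List (Fin n)) (S : Set (Fin e)) (w : Fin e) :
    w ∈ l.foldl (nstep M μ) S ↔ ∃ v ∈ S, w ∈ l.foldl (nstep M μ) {v} := by
  induction l generalizing S with
  | nil => simp
  | cons j l ih =>
      simp only [List.foldl_cons]
      constructor
      · intro h
        obtain ⟨u, hu, hw⟩ := (ih _).mp h
        obtain ⟨v, hv, huv⟩ := hu
        exact ⟨v, hv, (ih _).mpr ⟨u, ⟨v, rfl, huv⟩, hw⟩⟩
      · rintro ⟨v, hv, hw⟩
        obtain ⟨u, hu, hw2⟩ := (ih _).mp hw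
        obtain ⟨x, hx, hux⟩ := hu
        rw [Set.mem_singleton_iff] at hx
        subst hx
        exact (ih _).mpr ⟨u, ⟨x, hv, hux⟩, hw2⟩

private lemma mod_fold {n d : ℕ} [NeZero d] (hd : 2 ≤ d) (ν : Fin n → Bool)
    (l : List (Fin n)) (v : Fin d) :
    (l.foldl (fun v j => v + (if ν j then 1 else 0)) v).val
      = (v.val + (l.map (fun j => if ν j then 1 else 0)).sum) % d := by
  induction l generalizing v with
  | nil => simp [Nat.mod_eq_of_lt v.isLt]
  | cons j l ih =>
      simp only [List.foldl_cons, List.map_cons, List.sum_cons]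
      rw [ih]
      have h1 : ((v + if ν j then (1 : Fin d) else 0)).val
          = (v.val + if ν j then 1 else 0) % d := by
        cases hb : ν j <;>
          simp [Fin.add_def, Fin.val_one', Nat.mod_eq_of_lt v.isLt, Nat.mod_eq_of_lt hd]
      rw [h1, Nat.mod_add_mod, Nat.add_assoc]

private lemma MODf_mem_OBDDclass {n d : ℕ} (hd : 2 ≤ d) : (MODf n d) ∈ OBDDclass n d := by
  haveI : NeZero d := ⟨by omega⟩
  refine ⟨d, le_refl d,
    ⟨Equiv.refl _, fun _ b v => v + (if b then 1 else 0), 0, {0}⟩, ?_⟩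
  intro ν
  have hrun : ((List.finRange n).foldl
      (fun (v : Fin d) j => v + (if ν j then 1 else 0)) 0).val = countOnes ν % d := by
    rw [mod_fold hd]
    congr 1
    rw [countOnes, Finset.card_filter, Fin.sum_univ_def]
    simp
  have hacc : DOBDD.accepts
      (⟨Equiv.refl _, fun _ b v => v + (if b then 1 else 0), 0, ({0} : Finset (Fin d))⟩ :
        DOBDD n d) ν ↔
      ((List.finRange n).foldl (fun (v : Fin d) j => v + (if ν j then 1 else 0)) 0)
        ∈ ({0} : Finset (Fin d)) := Iff.rfl
  rw [hacc, Finset.mem_singleton, MODf, decide_eq_true_iff, ← hrun, Fin.ext_iff, Fin.val_zero]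

private lemma nobdd_to_dobdd {n e : ℕ} (M : NOBDD n e) (f : (Fin n → Bool) → Bool)
    (hM : M.computes f) : ∃ D : DOBDD n (2 ^ e), D.computes f := by
  classical
  let E : Finset (Fin e) ≃ Fin (2 ^ e) := Fintype.equivFinOfCardEq (by simp)
  set D : DOBDD n (2 ^ e) :=
    ⟨M.ord,
     fun j b v => E (Finset.univ.filter (fun w => ∃ u ∈ E.symm v, w ∈ M.T j b u)),
     E {M.start},
     Finset.univ.filter (fun v => ∃ u ∈ E.symm v, u ∈ M.Accept)⟩ with hD
  refine ⟨D, fun ν => ?_⟩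
  have hrun : M.reach ν = (↑(E.symm (D.run ν)) : Set (Fin e)) := by
    have hstart : ({M.start} : Set (Fin e)) = (↑(E.symm D.start) : Set (Fin e)) := by
      simp [hD]
    rw [NOBDD.reach, DOBDD.run, hstart]
    exact List.foldl_hom (fun v => (↑(E.symm v) : Set (Fin e)))
      (g₁ := fun v j => D.T j (ν (D.ord j)) v)
      (g₂ := fun S j => {w | ∃ v ∈ S, w ∈ M.T j (ν (M.ord j)) v})
      (l := List.finRange n) (init := D.start) (fun x j => by ext w; simp [hD])
  have hDa : D.accepts ν ↔ M.accepts ν := by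
    rw [DOBDD.accepts, NOBDD.accepts, hrun]
    simp [hD]
  exact hDa.trans (hM ν)

private lemma MODf_not_mem_NOBDDclass {n d : ℕ} (h1 : 2 ≤ d) (h2 : d ≤ n / 2) :
    MODf n d ∉ NOBDDclass n (Nat.log 2 d) := by
  classical
  rintro ⟨e, he, M, hM⟩
  have hn : 2 * d ≤ n := by omega
  set μfun : ℕ → ℕ → Fin n → Bool := fun a c j =>
    if (j : ℕ) < d then decide ((j : ℕ) < a) else decide ((j : ℕ) < d + c) with hμ
  set νfun : ℕ → ℕ → Fin n → Bool := fun a c i => μfun a c (M.ord.symm i) with hν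
  -- number of ones
  have hcount : ∀ a c, a ≤ d → d + c ≤ n → countOnes (νfun a c) = a + c := by
    intro a c ha hc
    have e1 : countOnes (μfun a c) = countOnes (νfun a c) := by
      unfold countOnes
      exact Finset.card_equiv M.ord (fun j => by
        simp [hν, Equiv.symm_apply_apply])
    have e2 : countOnes (μfun a c) = (Finset.range a ∪ Finset.Ico d (d + c)).card := by
      unfold countOnes
      rw [show (Finset.univ.filter (fun j : Fin n => μfun a c j = true))
          = (Finset.univ.filter
              (fun j : Fin n => (j : ℕ) ∈ (Finset.range a ∪ Finset.Ico d (d + c)))) from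
        Finset.filter_congr (fun j _ => by
          by_cases hjd : (j : ℕ) < d <;>
            simp only [hμ, hjd, if_true, if_false, decide_eq_true_eq, Finset.mem_union,
              Finset.mem_range, Finset.mem_Ico, eq_iff_iff] <;>
            constructor <;> omega)]
      exact aux_card_val_mem (Finset.range a ∪ Finset.Ico d (d + c))
        (by intro x hx
            simp only [Finset.mem_union, Finset.mem_range, Finset.mem_Ico] at hx
            omega)
    have e3 : (Finset.range a ∪ Finset.Ico d (d + c)).card = a + c := by
      rw [Finset.card_union_of_disjoint (by
        rw [Finset.disjoint_left]
        intro x hx hx2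
        simp only [Finset.mem_range] at hx
        simp only [Finset.mem_Ico] at hx2
        omega)]
      rw [Finset.card_range, Nat.card_Ico]
      omega
    rw [← e1, e2, e3]
  -- choice of suffix count
  set ca : ℕ → ℕ := fun a => (d - a) % d with hca
  have hca2 : ∀ a, ca a < d := fun a => Nat.mod_lt _ (by omega)
  have hca1 : ∀ a, a < d → (a + ca a) % d = 0 := by
    intro a had
    rcases Nat.eq_zero_or_pos a with rfl | hpos
    · simp [hca]
    · have : ca a = d - a := by
        rw [hca]; exact Nat.mod_eq_of_lt (by omega)
      rw [this, show a + (d - a) = d by omega, Nat.mod_self]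
  -- prefix/suffix membership facts
  have hmem1 : ∀ j ∈ (List.finRange n).take d, (j : ℕ) < d := by
    intro j hj
    obtain ⟨i, hi, rfl⟩ := List.mem_iff_getElem.mp hj
    simp only [List.length_take, List.length_finRange] at hi
    simp only [List.getElem_take, List.getElem_finRange, Fin.coe_cast]
    omega
  have hmem2 : ∀ j ∈ (List.finRange n).drop d, d ≤ (j : ℕ) := by
    intro j hj
    obtain ⟨i, hi, rfl⟩ := List.mem_iff_getElem.mp hj
    simp only [List.getElem_drop, List.getElem_finRange, Fin.coe_cast]
    omega
  -- reach decomposition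
  have hreach : ∀ a c, M.reach (νfun a c)
      = ((List.finRange n).drop d).foldl (nstep M (μfun a c))
        (((List.finRange n).take d).foldl (nstep M (μfun a 0)) {M.start}) := by
    intro a c
    rw [reach_eq_foldl]
    have hf : (fun j => νfun a c (M.ord j)) = μfun a c := by
      funext j
      simp only [hν, Equiv.symm_apply_apply]
    rw [hf]
    conv_lhs => rw [← List.take_append_drop d (List.finRange n)]
    rw [List.foldl_append]
    congr 1
    refine nstep_foldl_congr M _ (fun j hj => ?_) _
    have hjd := hmem1 j hj
    simp only [hμ, if_pos hjd]
  -- for each residue pick a witness node in the prefix-reach set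
  have hacc : ∀ a : Fin d,
      ∃ u ∈ ((List.finRange n).take d).foldl (nstep M (μfun (a : ℕ) 0)) {M.start},
      ∃ v ∈ ((List.finRange n).drop d).foldl (nstep M (μfun (a : ℕ) (ca (a : ℕ)))) {u},
        v ∈ M.Accept := by
    intro a
    have hMODtrue : MODf n d (νfun (a : ℕ) (ca (a : ℕ))) = true := by
      unfold MODf
      rw [hcount _ _ (le_of_lt a.isLt) (by have := hca2 (a : ℕ); omega),
        decide_eq_true_eq]
      exact hca1 _ a.isLt
    have hAc := (hM _).mpr hMODtrue
    rw [NOBDD.accepts, hreach] at hAc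
    obtain ⟨v, hv, hvacc⟩ := hAc
    obtain ⟨u, hu, hvu⟩ := (mem_nstep_foldl M _ _ _ _).mp hv
    exact ⟨u, hu, v, hvu, hvacc⟩
  choose g hg1 hg2 using hacc
  have hinj : Function.Injective g := by
    intro a b hab
    obtain ⟨v, hv, hvA⟩ := hg2 a
    have hcong : ((List.finRange n).drop d).foldl (nstep M (μfun (a : ℕ) (ca (a : ℕ)))) {g a}
        = ((List.finRange n).drop d).foldl (nstep M (μfun (b : ℕ) (ca (a : ℕ)))) {g a} := by
      refine nstep_foldl_congr M _ (fun j hj => ?_) _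
      have hjd := hmem2 j hj
      simp only [hμ, if_neg (by omega : ¬ ((j : ℕ) < d))]
    rw [hcong, hab] at hv
    have hv2 : v ∈ ((List.finRange n).drop d).foldl (nstep M (μfun (b : ℕ) (ca (a : ℕ))))
        (((List.finRange n).take d).foldl (nstep M (μfun (b : ℕ) 0)) {M.start}) :=
      (mem_nstep_foldl M _ _ _ _).mpr ⟨g b, hg1 b, hv⟩
    rw [← hreach] at hv2
    have hBacc : M.accepts (νfun (b : ℕ) (ca (a : ℕ))) := ⟨v, hv2, hvA⟩
    have hBmod := (hM _).mp hBacc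
    unfold MODf at hBmod
    rw [hcount _ _ (le_of_lt b.isLt) (by have := hca2 (a : ℕ); omega),
      decide_eq_true_eq] at hBmod
    have hAmod := hca1 _ a.isLt
    have hd1 := Nat.dvd_of_mod_eq_zero hBmod
    have hd2 := Nat.dvd_of_mod_eq_zero hAmod
    have h5 : d ∣ ((b : ℕ) - (a : ℕ)) := by
      have := Nat.dvd_sub hd1 hd2
      rwa [show (b : ℕ) + ca (a : ℕ) - ((a : ℕ) + ca (a : ℕ)) = (b : ℕ) - (a : ℕ) from by omega]
        at this
    have h6 : d ∣ ((a : ℕ) - (b : ℕ)) := by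
      have := Nat.dvd_sub hd2 hd1
      rwa [show (a : ℕ) + ca (a : ℕ) - ((b : ℕ) + ca (a : ℕ)) = (a : ℕ) - (b : ℕ) from by omega]
        at this
    have e5 := Nat.eq_zero_of_dvd_of_lt h5 (by have := b.isLt; omega)
    have e6 := Nat.eq_zero_of_dvd_of_lt h6 (by have := a.isLt; omega)
    exact Fin.val_injective (by omega : (a : ℕ) = (b : ℕ))
  have hcard := Fintype.card_le_of_injective g hinj
  simp only [Fintype.card_fin] at hcard
  have hlog : Nat.log 2 d < d := Nat.log_lt_self 2 (by omega)
  omega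

end AuxNOBDD

/-- For all `n, d` with `2 ≤ d ≤ n/2`: every function computed by an NOBDD of width at most
`⌊log₂ d⌋` is computed by a deterministic OBDD of width at most `d`, and some function is
computed by a deterministic OBDD of width at most `d` but by no NOBDD of width at most
`⌊log₂ d⌋`; i.e. `NOBDD^{⌊log₂ d⌋} ⊊ OBDD^d`. -/
theorem NOBDD_log_strict_in_OBDD (n d : ℕ) (h1 : 2 ≤ d) (h2 : d ≤ n / 2) :
    (∀ f : (Fin n → Bool) → Bool, f ∈ NOBDDclass n (Nat.log 2 d) → f ∈ OBDDclass n d) ∧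
    (∃ f : (Fin n → Bool) → Bool, f ∈ OBDDclass n d ∧ f ∉ NOBDDclass n (Nat.log 2 d)) ∧
    NOBDDclass n (Nat.log 2 d) ⊂ OBDDclass n d := by
  have hpos : MODf n d ∈ OBDDclass n d := MODf_mem_OBDDclass h1
  have hneg : MODf n d ∉ NOBDDclass n (Nat.log 2 d) := MODf_not_mem_NOBDDclass h1 h2
  have hsub : ∀ f : (Fin n → Bool) → Bool,
      f ∈ NOBDDclass n (Nat.log 2 d) → f ∈ OBDDclass n d := by
    rintro f ⟨e, he, M, hM⟩
    obtain ⟨D, hD⟩ := nobdd_to_dobdd M f hM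
    refine ⟨2 ^ e, ?_, D, hD⟩
    calc 2 ^ e ≤ 2 ^ Nat.log 2 d := Nat.pow_le_pow_right (by norm_num) he
      _ ≤ d := Nat.pow_log_le_self 2 (by omega)
  refine ⟨hsub, ⟨MODf n d, hpos, hneg⟩, ?_⟩
  rw [Set.ssubset_def]
  exact ⟨fun f hf => hsub f hf, fun hcon => hneg (hcon hpos)⟩
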